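/- The asymptotic slope m, viewed as a function of the roundtrip efficiency r = η⁺η⁻ ∈ (0,1], satisfies m(r) = max over (a,b) ∈ A of (1-r)b/(1 - a(1-r)), where A = {(a,b) ∈ [0,1] × [0, φ(0)] : φ(μ) ≥ aμ + b for all μ ∈ ℝ}; consequently m(r) is convex and nonincreasing in r. -/

import Mathlib

set_option maxHeartbeats 1000000 in
theorem slope_envelope_representation
    (φ : ℝ → ℝ) (hconv : ConvexOn ℝ Set.univ φ) (hmono : Monotone φ)
    (hcont : Continuous φ)
    (h0 : ∀ z ≤ (-1 : ℝ), φ z = 0) (h1 : ∀ z ≥ (1 : ℝ), φ z = z)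
    (m : ℝ → ℝ)
    (hm : ∀ r ∈ Set.Ioc (0 : ℝ) 1, IsLeast {μ : ℝ | (1 - r) * φ μ ≤ μ} (m r)) :
    (∀ r ∈ Set.Ioc (0 : ℝ) 1,
      IsGreatest {v : ℝ | ∃ a b : ℝ, a ∈ Set.Icc (0 : ℝ) 1 ∧ b ∈ Set.Icc (0 : ℝ) (φ 0) ∧
        (∀ μ : ℝ, a * μ + b ≤ φ μ) ∧ v = (1 - r) * b / (1 - a * (1 - r))} (m r)) ∧
    ConvexOn ℝ (Set.Ioc (0 : ℝ) 1) m ∧ AntitoneOn m (Set.Ioc (0 : ℝ) 1) := by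
  -- φ is nonnegative
  have hφ0 : ∀ z, (0:ℝ) ≤ φ z := by
    intro z
    rcases le_or_gt z (-1) with h | h
    · rw [h0 z h]
    · rw [← h0 (-1) le_rfl]; exact hmono h.le
  -- φ z ≥ z
  have hφid : ∀ z, z ≤ φ z := by
    intro z
    rcases le_or_gt 1 z with h | h
    · rw [h1 z h]
    · have key := hconv.2 (Set.mem_univ z) (Set.mem_univ 2)
        (show (0:ℝ) ≤ 1/(2-z) by
          apply div_nonneg <;> linarith)
        (show (0:ℝ) ≤ (1-z)/(2-z) by
          apply div_nonneg <;> linarith)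
        (show 1/(2-z) + (1-z)/(2-z) = 1 by
          rw [← add_div, div_eq_one_iff_eq (by intro hc; linarith)]; ring)
      have hne2 : (2:ℝ) - z ≠ 0 := by intro hc; linarith
      have hz2 : (1/(2-z)) • z + ((1-z)/(2-z)) • (2:ℝ) = 1 := by
        simp only [smul_eq_mul]; field_simp; ring
      rw [hz2, h1 1 le_rfl, h1 2 (by norm_num)] at key
      simp only [smul_eq_mul] at key
      have h2z : (0:ℝ) < 2 - z := by linarith
      rw [div_mul_eq_mul_div, div_mul_eq_mul_div, ← add_div, le_div_iff₀ h2z] at key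
      linarith
  -- equality at m r
  have heq : ∀ r ∈ Set.Ioc (0:ℝ) 1, (1 - r) * φ (m r) = m r := by
    intro r hr
    obtain ⟨hmem, hlb⟩ := hm r hr
    rcases eq_or_lt_of_le (show (1 - r) * φ (m r) ≤ m r from hmem) with h | h
    · exact h
    exfalso
    have hr1 : (0:ℝ) ≤ 1 - r := by linarith [hr.2]
    have hμ0 : 0 ≤ m r := le_trans (mul_nonneg hr1 (hφ0 _)) hmem
    have hμpos : 0 < m r := by
      rcases eq_or_lt_of_le hμ0 with h' | h'
      · exfalso
        have : (1 - r) * φ (m r) < 0 := by rw [← h'] at h ⊢; exact h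
        nlinarith [hφ0 (m r)]
      · exact h'
    -- continuity: find smaller point in the set
    have hcf : Continuous (fun μ => (1 - r) * φ μ - μ) := by continuity
    have hev : ∀ᶠ μ in nhds (m r), (1 - r) * φ μ - μ < 0 :=
      (hcf.continuousAt).eventually_lt continuous_const.continuousAt (by simpa using h)
    rw [Metric.eventually_nhds_iff] at hev
    obtain ⟨δ, hδ, hball⟩ := hev
    set μ' := max 0 (m r - δ/2) with hμ'
    have hμ'lt : μ' < m r := by
      apply max_lt hμpos; linarith
    have hμ'close : dist μ' (m r) < δ := by
      rw [Real.dist_eq, abs_lt]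
      constructor
      · have : m r - δ/2 ≤ μ' := le_max_right _ _
        linarith
      · linarith
    have := hball hμ'close
    have hμ'mem : μ' ∈ {μ : ℝ | (1 - r) * φ μ ≤ μ} := by
      simp only [Set.mem_setOf_eq]; linarith
    exact absurd (hlb hμ'mem) (not_le.mpr hμ'lt)
  -- the IsGreatest statement
  have hgreat : ∀ r ∈ Set.Ioc (0 : ℝ) 1,
      IsGreatest {v : ℝ | ∃ a b : ℝ, a ∈ Set.Icc (0 : ℝ) 1 ∧ b ∈ Set.Icc (0 : ℝ) (φ 0) ∧
        (∀ μ : ℝ, a * μ + b ≤ φ μ) ∧ v = (1 - r) * b / (1 - a * (1 - r))} (m r) := by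
    intro r hr
    obtain ⟨hmem, hlb⟩ := hm r hr
    set μs := m r with hμs
    have hE := heq r hr
    have hr0 : (0:ℝ) < r := hr.1
    have hr1 : (0:ℝ) ≤ 1 - r := by linarith [hr.2]
    have hμ0 : 0 ≤ μs := le_trans (mul_nonneg hr1 (hφ0 _)) hmem
    have hμle1 : μs ≤ 1 := hlb (by
      simp only [Set.mem_setOf_eq, h1 1 le_rfl]; nlinarith)
    have hμ1 : μs < 1 := by
      rcases eq_or_lt_of_le hμle1 with h' | h'
      · exfalso
        rw [← hμs, h', h1 1 le_rfl] at hE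
        linarith
      · exact h'
    -- supporting line at μs
    set S := (fun x => (φ μs - φ x) / (μs - x)) '' Set.Iio μs with hS
    have hslope : ∀ x < μs, ∀ y > μs,
        (φ μs - φ x) / (μs - x) ≤ (φ y - φ μs) / (y - μs) := fun x hx y hy =>
      hconv.slope_mono_adjacent (Set.mem_univ x) (Set.mem_univ y) hx hy
    have hne : S.Nonempty := ⟨_, ⟨μs - 1, by simp [hS], rfl⟩⟩
    have hbdd : BddAbove S := by
      refine ⟨(φ 1 - φ μs) / (1 - μs), ?_⟩
      rintro v ⟨x, hx, rfl⟩
      exact hslope x hx 1 hμ1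
    set a := sSup S with ha
    have ha0 : 0 ≤ a := by
      have h1' : (φ μs - φ (μs - 1)) / (μs - (μs - 1)) ∈ S := ⟨μs - 1, by simp, rfl⟩
      have : (0:ℝ) ≤ (φ μs - φ (μs - 1)) / (μs - (μs - 1)) := by
        apply div_nonneg
        · have := hmono (show μs - 1 ≤ μs by linarith); linarith
        · linarith
      exact le_trans this (le_csSup hbdd h1')
    have ha1 : a ≤ 1 := by
      apply csSup_le hne
      rintro v ⟨x, hx, rfl⟩
      calc (φ μs - φ x) / (μs - x) ≤ (φ 1 - φ μs) / (1 - μs) := hslope x hx 1 hμ1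
        _ ≤ 1 := by
          rw [div_le_one (by linarith), h1 1 le_rfl]
          have := hφid μs; linarith
    set b := φ μs - a * μs with hb
    have hsupp : ∀ μ, a * μ + b ≤ φ μ := by
      intro μ
      rcases lt_trichotomy μ μs with h | h | h
      · have hmem' : (φ μs - φ μ) / (μs - μ) ∈ S := ⟨μ, h, rfl⟩
        have := le_csSup hbdd hmem'
        rw [div_le_iff₀ (by linarith : (0:ℝ) < μs - μ)] at this
        simp only [hb]; nlinarith
      · simp [h, hb]
      · have : a ≤ (φ μ - φ μs) / (μ - μs) := by
          apply csSup_le hne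
          rintro v ⟨x, hx, rfl⟩
          exact hslope x hx μ h
        rw [le_div_iff₀ (by linarith : (0:ℝ) < μ - μs)] at this
        simp only [hb]; nlinarith
    have hb0 : 0 ≤ b := by
      have h1' := hφid μs
      simp only [hb]; nlinarith
    have hbφ0 : b ≤ φ 0 := by have := hsupp 0; linarith
    have hD : (0:ℝ) < 1 - a * (1 - r) := by nlinarith
    constructor
    · exact ⟨a, b, ⟨ha0, ha1⟩, ⟨hb0, hbφ0⟩, hsupp, by
        rw [eq_div_iff hD.ne']
        simp only [hb]; nlinarith⟩
    · rintro v ⟨a', b', ⟨ha'0, ha'1⟩, ⟨hb'0, hb'φ⟩, hsupp', rfl⟩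
      have hD' : (0:ℝ) < 1 - a' * (1 - r) := by nlinarith
      rw [div_le_iff₀ hD']
      have h1' := hsupp' μs
      nlinarith
  refine ⟨hgreat, ?_, ?_⟩
  · -- convexity
    refine ⟨convex_Ioc 0 1, ?_⟩
    intro r1 hr1 r2 hr2 t1 t2 ht1 ht2 hts
    simp only [smul_eq_mul]
    set r := t1 * r1 + t2 * r2 with hrdef
    have hrmem : r ∈ Set.Ioc (0:ℝ) 1 := (convex_Ioc (0:ℝ) 1) hr1 hr2 ht1 ht2 hts
    obtain ⟨⟨a, b, ⟨ha0, ha1⟩, ⟨hb0, hbφ⟩, hsupp, hval⟩, _⟩ := hgreat r hrmem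
    have h1 := (hgreat r1 hr1).2 ⟨a, b, ⟨ha0, ha1⟩, ⟨hb0, hbφ⟩, hsupp, rfl⟩
    have h2 := (hgreat r2 hr2).2 ⟨a, b, ⟨ha0, ha1⟩, ⟨hb0, hbφ⟩, hsupp, rfl⟩
    rw [hval]
    have hD : (0:ℝ) < 1 - a * (1 - r) := by nlinarith [hrmem.1, hrmem.2]
    have hD1 : (0:ℝ) < 1 - a * (1 - r1) := by nlinarith [hr1.1, hr1.2]
    have hD2 : (0:ℝ) < 1 - a * (1 - r2) := by nlinarith [hr2.1, hr2.2]
    have key : (1 - r) * b / (1 - a * (1 - r)) ≤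
        t1 * ((1 - r1) * b / (1 - a * (1 - r1))) + t2 * ((1 - r2) * b / (1 - a * (1 - r2))) := by
      rw [mul_div_assoc', mul_div_assoc', div_add_div _ _ hD1.ne' hD2.ne',
        div_le_div_iff₀ hD (mul_pos hD1 hD2)]
      have e2 : t2 = 1 - t1 := by linarith
      rw [hrdef, e2]
      nlinarith [mul_nonneg (mul_nonneg (mul_nonneg (mul_nonneg ht1
        (by linarith : (0:ℝ) ≤ 1 - t1)) ha0) hb0) (sq_nonneg (r1 - r2))]
    calc (1 - r) * b / (1 - a * (1 - r)) ≤
        t1 * ((1 - r1) * b / (1 - a * (1 - r1))) + t2 * ((1 - r2) * b / (1 - a * (1 - r2))) := key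
      _ ≤ t1 * m r1 + t2 * m r2 := by
          apply add_le_add
          · exact mul_le_mul_of_nonneg_left h1 ht1
          · exact mul_le_mul_of_nonneg_left h2 ht2
  · -- antitone
    intro r1 hr1 r2 hr2 hle
    obtain ⟨⟨a, b, ⟨ha0, ha1⟩, ⟨hb0, hbφ⟩, hsupp, hval⟩, _⟩ := hgreat r2 hr2
    have h1 := (hgreat r1 hr1).2 ⟨a, b, ⟨ha0, ha1⟩, ⟨hb0, hbφ⟩, hsupp, rfl⟩
    rw [hval]
    refine le_trans ?_ h1
    have hD1 : (0:ℝ) < 1 - a * (1 - r1) := by nlinarith [hr1.1, hr1.2]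
    have hD2 : (0:ℝ) < 1 - a * (1 - r2) := by nlinarith [hr2.1, hr2.2]
    rw [div_le_div_iff₀ hD2 hD1]
    nlinarith [mul_nonneg hb0 (sub_nonneg.mpr hle)]
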